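/- Let u and v be convergent power series with real coefficients such that the formal product v·u equals 1, let n ≥ 1, and let w : ℝ → ℝ be continuous. Then u • w is a polynomial function of degree at most n−1 (i.e., of the form x ↦ Σ_{k=0}^{n−1} c_k x^k / k!) if and only if w = E(v·p) for some real polynomial p = Σ_{k=0}^{n−1} p_k T^k of degree at most n−1, where v·p is the Cauchy product and E is the E-transform. (This expresses Theorem 1: the solutions of the differential equation D_φ w = 0 for φ = u/T^n are exactly w = E(p/u) with deg p ≤ n−1.) -/

import Mathlib

/-- The normalized indefinite integral: `(V w) x = ∫_0^x w(t) dt`. -/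
noncomputable def V (w : ℝ → ℝ) : ℝ → ℝ := fun x => ∫ t in (0:ℝ)..x, w t

open MeasureTheory Finset

namespace Thm1Aux




lemma continuous_V {w : ℝ → ℝ} (hw : Continuous w) : Continuous (V w) :=
  intervalIntegral.continuous_primitive (fun a b => hw.intervalIntegrable a b) 0

lemma continuous_iterV {w : ℝ → ℝ} (hw : Continuous w) (m : ℕ) : Continuous (V^[m] w) := by
  induction m with
  | zero => exact hw
  | succ m ih => rw [Function.iterate_succ_apply']; exact continuous_V ih

lemma iterV_sub {f g : ℝ → ℝ} (hf : Continuous f) (hg : Continuous g) (m : ℕ) :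
    ∀ x, V^[m] (fun y => f y - g y) x = V^[m] f x - V^[m] g x := by
  induction m with
  | zero => intro x; rfl
  | succ m ih =>
    intro x
    rw [Function.iterate_succ_apply', Function.iterate_succ_apply',
      Function.iterate_succ_apply']
    have : V^[m] (fun y => f y - g y) = fun y => V^[m] f y - V^[m] g y := funext ih
    rw [this]
    show (∫ t in (0:ℝ)..x, (V^[m] f t - V^[m] g t)) = _
    rw [intervalIntegral.integral_sub ((continuous_iterV hf m).intervalIntegrable _ _)
      ((continuous_iterV hg m).intervalIntegrable _ _)]
    rfl

lemma integral_abs_pow_nonneg {x : ℝ} (hx : 0 ≤ x) (m : ℕ) :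
    (∫ t in (0:ℝ)..x, |t| ^ m) = |x| ^ (m+1) / (m+1) := by
  rw [abs_of_nonneg hx]
  rw [intervalIntegral.integral_congr (g := fun t => t ^ m)]
  · rw [integral_pow]; simp
  · intro t ht
    rw [Set.uIcc_of_le hx] at ht
    exact congrArg (· ^ m) (abs_of_nonneg ht.1)

lemma integral_abs_pow_nonpos {x : ℝ} (hx : x ≤ 0) (m : ℕ) :
    (∫ t in x..(0:ℝ), |t| ^ m) = |x| ^ (m+1) / (m+1) := by
  rw [intervalIntegral.integral_congr (g := fun t => (-t) ^ m)]
  · rw [intervalIntegral.integral_comp_neg (fun t => t ^ m)]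
    rw [integral_pow]
    simp [abs_of_nonpos hx]
  · intro t ht
    rw [Set.uIcc_of_le hx] at ht
    exact congrArg (· ^ m) (abs_of_nonpos ht.2)


lemma iterV_bound {w : ℝ → ℝ} (hw : Continuous w) {R M : ℝ}
    (hM : ∀ y ∈ Set.Icc (-R) R, |w y| ≤ M) (m : ℕ) :
    ∀ x ∈ Set.Icc (-R) R, |V^[m] w x| ≤ M * |x| ^ m / (Nat.factorial m) := by
  induction m with
  | zero => intro x hx; simpa using hM x hx
  | succ m ih =>
    intro x hx
    have hR : (0:ℝ) ≤ R := by nlinarith [hx.1, hx.2]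
    have hfac : (0:ℝ) < (Nat.factorial m : ℝ) := by positivity
    have key : ∀ t, t ∈ Set.Icc (-R) R → |V^[m] w t| ≤ M / (Nat.factorial m) * |t| ^ m := by
      intro t ht
      calc |V^[m] w t| ≤ M * |t| ^ m / (Nat.factorial m) := ih t ht
        _ = M / (Nat.factorial m) * |t| ^ m := by ring
    have hcont : Continuous (fun t : ℝ => M / (Nat.factorial m) * |t| ^ m) := by continuity
    have heq : M / (Nat.factorial m) * (|x| ^ (m+1) / (m+1)) = M * |x| ^ (m+1) / (Nat.factorial (m+1)) := by
      rw [Nat.factorial_succ]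
      push_cast
      rw [div_mul_div_comm, mul_comm ((Nat.factorial m : ℝ)) ((m:ℝ)+1)]
    rw [Function.iterate_succ_apply']
    show |∫ t in (0:ℝ)..x, V^[m] w t| ≤ _
    rcases le_total 0 x with h0 | h0
    · calc |∫ t in (0:ℝ)..x, V^[m] w t|
          ≤ ∫ t in (0:ℝ)..x, |V^[m] w t| := intervalIntegral.abs_integral_le_integral_abs h0
        _ ≤ ∫ t in (0:ℝ)..x, M / (Nat.factorial m) * |t| ^ m := by
            apply intervalIntegral.integral_mono_on h0
              ((continuous_iterV hw m).abs.intervalIntegrable _ _)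
              (hcont.intervalIntegrable _ _)
            intro t ht
            exact key t ⟨le_trans (neg_nonpos.2 hR) ht.1, le_trans ht.2 hx.2⟩
        _ = M / (Nat.factorial m) * (|x| ^ (m+1) / (m+1)) := by
            rw [intervalIntegral.integral_const_mul, integral_abs_pow_nonneg h0]
        _ = _ := heq
    · calc |∫ t in (0:ℝ)..x, V^[m] w t|
          = |∫ t in x..(0:ℝ), V^[m] w t| := by rw [intervalIntegral.integral_symm x 0, abs_neg]
        _ ≤ ∫ t in x..(0:ℝ), |V^[m] w t| := intervalIntegral.abs_integral_le_integral_abs h0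
        _ ≤ ∫ t in x..(0:ℝ), M / (Nat.factorial m) * |t| ^ m := by
            apply intervalIntegral.integral_mono_on h0
              ((continuous_iterV hw m).abs.intervalIntegrable _ _)
              (hcont.intervalIntegrable _ _)
            intro t ht
            exact key t ⟨le_trans hx.1 ht.1, le_trans ht.2 hR⟩
        _ = M / (Nat.factorial m) * (|x| ^ (m+1) / (m+1)) := by
            rw [intervalIntegral.integral_const_mul, integral_abs_pow_nonpos h0]
        _ = _ := heq

lemma exists_geom_bound {a : ℕ → ℝ} {r : ℝ} (hr : 0 < r)
    (h : Summable fun n => |a n| * r ^ n) :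
    ∃ C s : ℝ, 0 ≤ C ∧ 0 < s ∧ ∀ n, |a n| ≤ C * s ^ n := by
  refine ⟨∑' n, |a n| * r ^ n, 1/r, tsum_nonneg (fun n => by positivity), by positivity, ?_⟩
  intro n
  have h1 : |a n| * r ^ n ≤ ∑' n, |a n| * r ^ n :=
    Summable.le_tsum h n (fun b _ => by positivity)
  have h2 : |a n| = (|a n| * r ^ n) * (1/r) ^ n := by
    rw [mul_assoc, ← mul_pow, mul_one_div_cancel hr.ne', one_pow, mul_one]
  rw [h2]
  exact mul_le_mul_of_nonneg_right h1 (by positivity)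

lemma exists_sup_bound {w : ℝ → ℝ} (hw : Continuous w) (R : ℝ) :
    ∃ M : ℝ, 0 ≤ M ∧ ∀ y ∈ Set.Icc (-|R|) |R|, |w y| ≤ M := by
  have hne : (Set.Icc (-|R|) |R|).Nonempty := Set.nonempty_Icc.2 (neg_le_self (abs_nonneg R))
  obtain ⟨y₀, hy₀mem, hy₀⟩ := isCompact_Icc.exists_isMaxOn hne hw.abs.continuousOn
  exact ⟨|w y₀|, abs_nonneg _, fun y hy => hy₀ hy⟩

lemma summable_a_iterV {a : ℕ → ℝ} {C s : ℝ} (ha : ∀ m, |a m| ≤ C * s ^ m)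
    {w : ℝ → ℝ} (hw : Continuous w) (x : ℝ) :
    Summable fun m => a m * V^[m] w x := by
  obtain ⟨M, hM0, hM⟩ := exists_sup_bound hw x
  have hxmem : x ∈ Set.Icc (-|x|) |x| := ⟨neg_abs_le x, le_abs_self x⟩
  apply Summable.of_norm_bounded (g := fun m => (C * M) * ((s * |x|) ^ m / (Nat.factorial m)))
    (((Real.summable_pow_div_factorial (s * |x|)).mul_left (C * M)))
  intro m
  have h1 : |a m * V^[m] w x| = |a m| * |V^[m] w x| := abs_mul _ _
  rw [Real.norm_eq_abs, h1]
  have h2 : |V^[m] w x| ≤ M * |x| ^ m / (Nat.factorial m) := iterV_bound hw hM m x hxmem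
  calc |a m| * |V^[m] w x| ≤ (C * s ^ m) * (M * |x| ^ m / (Nat.factorial m)) :=
        mul_le_mul (ha m) h2 (abs_nonneg _) (le_trans (abs_nonneg _) (ha m))
    _ = (C * M) * ((s * |x|) ^ m / (Nat.factorial m)) := by rw [mul_pow]; ring

lemma continuous_E {q : ℕ → ℝ} {C s : ℝ} (hC : 0 ≤ C) (hs : 0 ≤ s)
    (hq : ∀ j, |q j| ≤ C * s ^ j) :
    Continuous (fun x : ℝ => ∑' j, q j * x ^ j / (Nat.factorial j)) := by
  rw [continuous_iff_continuousAt]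
  intro x₀
  set R := |x₀| + 1 with hR
  have hR0 : 0 < R := by positivity
  have hsum : Summable fun j => C * ((s * R) ^ j / (Nat.factorial j)) :=
    (Real.summable_pow_div_factorial (s * R)).mul_left C
  have hb : ∀ (j : ℕ) (x : ℝ), x ∈ Metric.ball (0:ℝ) R →
      ‖q j * x ^ j / (Nat.factorial j)‖ ≤ C * ((s * R) ^ j / (Nat.factorial j)) := by
    intro j x hx
    have hxR : |x| ≤ R := le_of_lt (by simpa [Real.dist_eq] using hx)
    have hfac : (0:ℝ) < (Nat.factorial j : ℝ) := by positivity
    have h1 : ‖q j * x ^ j / (Nat.factorial j)‖ = |q j| * |x| ^ j / (Nat.factorial j) := by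
      rw [Real.norm_eq_abs, abs_div, abs_mul, abs_pow, Nat.abs_cast]
    rw [h1]
    have h2 : |q j| * |x| ^ j ≤ (C * s ^ j) * R ^ j :=
      mul_le_mul (hq j) (pow_le_pow_left₀ (abs_nonneg x) hxR j)
        (pow_nonneg (abs_nonneg x) j) (by positivity)
    calc |q j| * |x| ^ j / (Nat.factorial j) ≤ (C * s ^ j) * R ^ j / (Nat.factorial j) :=
          (div_le_div_iff_of_pos_right hfac).2 h2
      _ = C * ((s * R) ^ j / (Nat.factorial j)) := by rw [mul_pow]; ring
  have hto := tendstoUniformlyOn_tsum hsum hb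
  have hcont : ContinuousOn (fun x : ℝ => ∑' j, q j * x ^ j / (Nat.factorial j))
      (Metric.ball (0:ℝ) R) := by
    apply hto.continuousOn
    refine Filter.Frequently.of_forall fun t => ?_
    exact (continuous_finset_sum t (fun j _ => by continuity)).continuousOn
  have hx₀ : x₀ ∈ Metric.ball (0:ℝ) R := by
    simp [Real.dist_eq, hR]
  exact hcont.continuousAt (Metric.isOpen_ball.mem_nhds hx₀)


lemma term_int (c : ℝ) (e : ℕ) (x : ℝ) :
    (∫ t in (0:ℝ)..x, c * t ^ e / (Nat.factorial e)) = c * x ^ (e+1) / (Nat.factorial (e+1)) := by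
  have h : (fun t : ℝ => c * t ^ e / (Nat.factorial e)) =
      (fun t : ℝ => (c / (Nat.factorial e)) * t ^ e) := by
    funext t; ring
  rw [h, intervalIntegral.integral_const_mul, integral_pow]
  rw [Nat.factorial_succ]
  have h1 : ((0:ℝ)) ^ (e+1) = 0 := by simp
  rw [h1, sub_zero, div_mul_div_comm]
  push_cast
  rw [mul_comm ((Nat.factorial e : ℝ)) ((e:ℝ)+1)]

lemma norm_f_bound (q : ℕ → ℝ) (C s : ℝ) (hC : 0 ≤ C) (hs : 0 ≤ s)
    (hq : ∀ j, |q j| ≤ C * s ^ j) (m : ℕ) (x : ℝ) (j : ℕ) (t : ℝ) (ht : |t| ≤ |x|) :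
    ‖q j * t ^ (j+m) / (Nat.factorial (j+m))‖ ≤
      (C * |x| ^ m) * ((s * |x|) ^ j / (Nat.factorial j)) := by
  have h1 : ‖q j * t ^ (j+m) / (Nat.factorial (j+m))‖ =
      |q j| * |t| ^ (j+m) / (Nat.factorial (j+m)) := by
    rw [Real.norm_eq_abs, abs_div, abs_mul, abs_pow, Nat.abs_cast]
  rw [h1]
  have hfle : (Nat.factorial j : ℝ) ≤ (Nat.factorial (j+m) : ℝ) := by
    exact_mod_cast Nat.factorial_le (Nat.le_add_right j m)
  have h3 : |q j| * |t| ^ (j+m) / ((Nat.factorial (j+m)) : ℝ) ≤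
      (C * s ^ j) * |x| ^ (j+m) / (Nat.factorial j) := by
    gcongr
    exact hq j
    
  refine h3.trans_eq ?_
  rw [pow_add, mul_pow]; ring

lemma lint_ne_top (q : ℕ → ℝ) (C s : ℝ) (hC : 0 ≤ C) (hs : 0 ≤ s)
    (hq : ∀ j, |q j| ≤ C * s ^ j) (m : ℕ) (x : ℝ) (a b : ℝ)
    (hab : ∀ t ∈ Set.Ioc a b, |t| ≤ |x|) (hba : b - a ≤ |x|) :
    (∑' j, ∫⁻ t in Set.Ioc a b, ‖q j * t ^ (j+m) / (Nat.factorial (j+m))‖₊ ∂volume) ≠ ⊤ := by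
  set D : ℕ → ℝ := fun j => (C * |x| ^ m) * ((s * |x|) ^ j / (Nat.factorial j)) with hD
  have hD0 : ∀ j, 0 ≤ D j := fun j => by positivity
  have hDsum : Summable (fun j => D j * |x|) :=
    ((Real.summable_pow_div_factorial (s * |x|)).mul_left (C * |x| ^ m)).mul_right _
  have hb : ∀ j, (∫⁻ t in Set.Ioc a b, ‖q j * t ^ (j+m) / (Nat.factorial (j+m))‖₊ ∂volume) ≤
      ENNReal.ofReal (D j * |x|) := by
    intro j
    have h1 : (∫⁻ t in Set.Ioc a b, ‖q j * t ^ (j+m) / (Nat.factorial (j+m))‖₊ ∂volume) ≤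
        ∫⁻ _ in Set.Ioc a b, ENNReal.ofReal (D j) ∂volume := by
      apply setLIntegral_mono measurable_const
      intro t ht
      rw [← ENNReal.ofReal_coe_nnreal, coe_nnnorm]
      exact ENNReal.ofReal_le_ofReal (norm_f_bound q C s hC hs hq m x j t (hab t ht))
    refine h1.trans ?_
    rw [setLIntegral_const, Real.volume_Ioc]
    rw [ENNReal.ofReal_mul (hD0 j)]
    exact mul_le_mul_right (ENNReal.ofReal_le_ofReal hba) _
  refine ne_top_of_le_ne_top ?_ (ENNReal.tsum_le_tsum hb)
  rw [← ENNReal.ofReal_tsum_of_nonneg (fun j => by positivity) hDsum]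
  exact ENNReal.ofReal_ne_top

lemma key_int (q : ℕ → ℝ) (C s : ℝ) (hC : 0 ≤ C) (hs : 0 ≤ s)
    (hq : ∀ j, |q j| ≤ C * s ^ j) (m : ℕ) (x : ℝ) :
    (∫ t in (0:ℝ)..x, (∑' j, q j * t ^ (j+m) / (Nat.factorial (j+m)))) =
      ∑' j, q j * x ^ (j+m+1) / (Nat.factorial (j+m+1)) := by
  have hmeas : ∀ j : ℕ, AEStronglyMeasurable (fun t : ℝ => q j * t ^ (j+m) / (Nat.factorial (j+m)))
      (volume.restrict (Set.Ioc (min 0 x) (max 0 x))) := by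
    intro j
    exact (Continuous.aestronglyMeasurable (by continuity))
  have hterm : ∀ j : ℕ, (∫ t in (0:ℝ)..x, q j * t ^ (j+m) / (Nat.factorial (j+m))) =
      q j * x ^ (j+m+1) / (Nat.factorial (j+m+1)) := fun j => term_int (q j) (j+m) x
  rcases le_total 0 x with hx | hx
  · have h1 : ∀ t ∈ Set.Ioc (0:ℝ) x, |t| ≤ |x| := by
      intro t ht
      rw [abs_of_pos ht.1, abs_of_nonneg hx]; exact ht.2
    have h2 := lint_ne_top q C s hC hs hq m x 0 x h1 (by rw [abs_of_nonneg hx]; linarith)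
    rw [intervalIntegral.integral_of_le hx]
    rw [integral_tsum (fun j => by exact Continuous.aestronglyMeasurable (by continuity)) h2]
    refine tsum_congr fun j => ?_
    rw [← intervalIntegral.integral_of_le hx, hterm j]
  · have h1 : ∀ t ∈ Set.Ioc x (0:ℝ), |t| ≤ |x| := by
      intro t ht
      rw [abs_of_nonpos ht.2, abs_of_nonpos hx]
      linarith [ht.1]
    have h2 := lint_ne_top q C s hC hs hq m x x 0 h1 (by rw [abs_of_nonpos hx]; linarith)
    rw [intervalIntegral.integral_symm x 0, intervalIntegral.integral_of_le hx]
    rw [integral_tsum (fun j => by exact Continuous.aestronglyMeasurable (by continuity)) h2]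
    rw [← tsum_neg]
    refine tsum_congr fun j => ?_
    rw [← intervalIntegral.integral_of_le hx, ← intervalIntegral.integral_symm x 0, hterm j]

lemma iterV_E (q : ℕ → ℝ) (C s : ℝ) (hC : 0 ≤ C) (hs : 0 ≤ s)
    (hq : ∀ j, |q j| ≤ C * s ^ j) (m : ℕ) :
    ∀ x, V^[m] (fun y => ∑' j, q j * y ^ j / (Nat.factorial j)) x =
      ∑' j, q j * x ^ (j+m) / (Nat.factorial (j+m)) := by
  induction m with
  | zero => intro x; simp
  | succ m ih =>
    intro x
    rw [Function.iterate_succ_apply']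
    show (∫ t in (0:ℝ)..x, V^[m] (fun y => ∑' j, q j * y ^ j / (Nat.factorial j)) t) = _
    rw [intervalIntegral.integral_congr (g := fun t => ∑' j, q j * t ^ (j+m) / (Nat.factorial (j+m)))
      (fun t _ => ih t)]
    rw [key_int q C s hC hs hq m x]
    exact tsum_congr fun j => by ring_nf


set_option maxHeartbeats 1000000 in
lemma core (a q : ℕ → ℝ) (Ca sa C s : ℝ) (hCa : 0 ≤ Ca) (hsa : 0 ≤ sa) (hC : 0 ≤ C) (hs : 0 ≤ s)
    (ha : ∀ m, |a m| ≤ Ca * sa ^ m) (hq : ∀ j, |q j| ≤ C * s ^ j) (x : ℝ) :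
    ∑' m, a m * (∑' j, q j * x ^ (j+m) / (Nat.factorial (j+m))) =
      ∑' i, (∑ k ∈ Finset.range (i+1), a k * q (i-k)) * x ^ i / (Nat.factorial i) := by
  set F : ℕ × ℕ → ℝ := fun p => a p.1 * q p.2 * x ^ (p.1 + p.2) / (Nat.factorial (p.1 + p.2))
    with hFdef
  have hnormF : ∀ p : ℕ × ℕ, ‖F p‖ ≤
      (Ca * ((sa * |x|) ^ p.1 / (Nat.factorial p.1))) * (C * ((s * |x|) ^ p.2 / (Nat.factorial p.2))) := by
    rintro ⟨m, j⟩
    have h1 : ‖F (m, j)‖ = |a m| * |q j| * (|x| ^ m * |x| ^ j) / ((Nat.factorial (m + j)) : ℝ) := by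
      simp only [hFdef, Real.norm_eq_abs, abs_div, abs_mul, abs_pow, Nat.abs_cast, pow_add]
    have hfle : ((Nat.factorial m * Nat.factorial j : ℕ) : ℝ) ≤ ((Nat.factorial (m + j)) : ℝ) := by
      exact_mod_cast Nat.le_of_dvd (Nat.factorial_pos _) (Nat.factorial_mul_factorial_dvd_factorial_add m j)
    have h2 : |a m| * |q j| * (|x| ^ m * |x| ^ j) / ((Nat.factorial (m + j)) : ℝ) ≤
        (Ca * sa ^ m) * (C * s ^ j) * (|x| ^ m * |x| ^ j) / ((Nat.factorial m * Nat.factorial j : ℕ) : ℝ) := by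
      gcongr
      · exact ha m
      · exact hq j
    rw [h1]
    refine h2.trans_eq ?_
    push_cast
    rw [mul_pow, mul_pow]
    field_simp
  have hg : Summable (fun p : ℕ × ℕ =>
      (Ca * ((sa * |x|) ^ p.1 / (Nat.factorial p.1))) * (C * ((s * |x|) ^ p.2 / (Nat.factorial p.2)))) :=
    Summable.mul_of_nonneg
      ((Real.summable_pow_div_factorial (sa * |x|)).mul_left Ca)
      ((Real.summable_pow_div_factorial (s * |x|)).mul_left C)
      (fun m => by positivity) (fun j => by positivity)
  have hF : Summable F := Summable.of_norm_bounded hg hnormF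
  have hLHS : ∑' m, a m * (∑' j, q j * x ^ (j+m) / (Nat.factorial (j+m))) = ∑' p, F p := by
    rw [Summable.tsum_prod' hF hF.prod_factor]
    refine tsum_congr fun m => ?_
    rw [← tsum_mul_left]
    refine tsum_congr fun j => ?_
    simp only [hFdef]
    rw [Nat.add_comm j m]
    ring
  rw [hLHS]
  rw [← (Finset.HasAntidiagonal.sigmaAntidiagonalEquivProd (A := ℕ)).tsum_eq F]
  have hsig : Summable (fun σ : Σ n : ℕ, (Finset.HasAntidiagonal.antidiagonal n : Finset (ℕ × ℕ)) =>
      F (Finset.HasAntidiagonal.sigmaAntidiagonalEquivProd σ)) :=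
    (Finset.HasAntidiagonal.sigmaAntidiagonalEquivProd (A := ℕ)).summable_iff.mpr hF
  rw [Summable.tsum_sigma' (fun n => Summable.of_finite) hsig]
  refine tsum_congr fun n => ?_
  have h3 : ∀ c : (Finset.HasAntidiagonal.antidiagonal n : Finset (ℕ × ℕ)),
      F (Finset.HasAntidiagonal.sigmaAntidiagonalEquivProd ⟨n, c⟩) =
        (fun p : ℕ × ℕ => a p.1 * q p.2 * (x ^ n / (Nat.factorial n))) (c : ℕ × ℕ) := by
    rintro ⟨⟨i, j⟩, hc⟩
    have hij : i + j = n := Finset.HasAntidiagonal.mem_antidiagonal.1 hc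
    simp only [hFdef, Finset.HasAntidiagonal.sigmaAntidiagonalEquivProd_apply]
    show a i * q j * x ^ (i + j) / (Nat.factorial (i + j)) = _
    rw [hij, mul_div_assoc]
  calc (∑' c : (Finset.HasAntidiagonal.antidiagonal n : Finset (ℕ × ℕ)), F (Finset.HasAntidiagonal.sigmaAntidiagonalEquivProd ⟨n, c⟩))
      = ∑' c : (Finset.HasAntidiagonal.antidiagonal n : Finset (ℕ × ℕ)),
          (fun p : ℕ × ℕ => a p.1 * q p.2 * (x ^ n / (Nat.factorial n))) (c : ℕ × ℕ) := tsum_congr h3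
    _ = ∑ p ∈ Finset.HasAntidiagonal.antidiagonal n, (a p.1 * q p.2) * (x ^ n / (Nat.factorial n)) :=
        Finset.tsum_subtype (Finset.HasAntidiagonal.antidiagonal n)
          (fun p : ℕ × ℕ => a p.1 * q p.2 * (x ^ n / (Nat.factorial n)))
    _ = (∑ p ∈ Finset.HasAntidiagonal.antidiagonal n, a p.1 * q p.2) * (x ^ n / (Nat.factorial n)) := by
        rw [Finset.sum_mul]
    _ = (∑ k ∈ Finset.range (n+1), a k * q (n-k)) * x ^ n / (Nat.factorial n) := by
        rw [Finset.Nat.sum_antidiagonal_eq_sum_range_succ_mk]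
        rw [mul_div_assoc]


lemma cauchy_inverse (u v p : ℕ → ℝ)
    (hvu : ∀ m : ℕ, ∑ k ∈ Finset.range (m + 1), v k * u (m - k) = if m = 0 then 1 else 0) :
    ∀ i : ℕ, ∑ k ∈ Finset.range (i + 1),
        u k * (∑ l ∈ Finset.range (i - k + 1), v l * p (i - k - l)) = p i := by
  intro i
  set U : PowerSeries ℝ := PowerSeries.mk u with hU
  set Vs : PowerSeries ℝ := PowerSeries.mk v with hVs
  set P : PowerSeries ℝ := PowerSeries.mk p with hP
  have hVU : Vs * U = 1 := by
    ext m
    rw [PowerSeries.coeff_mul, Finset.Nat.sum_antidiagonal_eq_sum_range_succ_mk]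
    simp only [hU, hVs, PowerSeries.coeff_mk, PowerSeries.coeff_one]
    exact hvu m
  have hUP : U * (Vs * P) = P := by
    rw [← mul_assoc, mul_comm U Vs, hVU, one_mul]
  have hcoeff2 : ∀ j, (PowerSeries.coeff j) (Vs * P) =
      ∑ l ∈ Finset.range (j + 1), v l * p (j - l) := by
    intro j
    rw [PowerSeries.coeff_mul, Finset.Nat.sum_antidiagonal_eq_sum_range_succ_mk]
    simp only [hVs, hP, PowerSeries.coeff_mk]
  have := congrArg (PowerSeries.coeff i) hUP
  rw [PowerSeries.coeff_mul, Finset.Nat.sum_antidiagonal_eq_sum_range_succ_mk] at this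
  simp only [hcoeff2] at this
  simp only [PowerSeries.coeff_mk, hcoeff2, hU, hP] at this
  exact this

lemma cauchy_bound {v p : ℕ → ℝ} {C s : ℝ} (hC : 0 ≤ C) (hs : 0 < s)
    (hv : ∀ k, |v k| ≤ C * s ^ k) (n : ℕ) (hp : ∀ k, n ≤ k → p k = 0) :
    ∀ m, |∑ k ∈ Finset.range (m + 1), v k * p (m - k)| ≤
      (C * ∑ j ∈ Finset.range n, |p j| * (1/s) ^ j) * s ^ m := by
  intro m
  set T : ℝ := ∑ j ∈ Finset.range n, |p j| * (1/s) ^ j with hT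
  have habs : |∑ k ∈ Finset.range (m + 1), v k * p (m - k)| ≤
      ∑ k ∈ Finset.range (m + 1), |v k| * |p (m - k)| := by
    refine (Finset.abs_sum_le_sum_abs _ _).trans ?_
    exact le_of_eq (Finset.sum_congr rfl fun k _ => abs_mul _ _)
  refine habs.trans ?_
  have h1 : ∑ k ∈ Finset.range (m + 1), |v k| * |p (m - k)| ≤
      ∑ k ∈ Finset.range (m + 1), (C * s ^ k) * |p (m - k)| :=
    Finset.sum_le_sum fun k _ => mul_le_mul_of_nonneg_right (hv k) (abs_nonneg _)
  refine h1.trans ?_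
  have h2 : ∑ k ∈ Finset.range (m + 1), (C * s ^ k) * |p (m - k)| =
      ∑ j ∈ Finset.range (m + 1), (C * s ^ m) * (|p j| * (1/s) ^ j) := by
    rw [← Finset.sum_range_reflect]
    refine Finset.sum_congr rfl fun j hj => ?_
    have hjm : j ≤ m := Nat.lt_succ_iff.1 (Finset.mem_range.1 hj)
    have hidx : m + 1 - 1 - j = m - j := by omega
    rw [hidx]
    have : m - (m - j) = j := Nat.sub_sub_self hjm
    rw [this]
    have hsj : s ^ (m - j) = s ^ m / s ^ j := pow_sub₀ s (ne_of_gt hs) hjm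
    rw [hsj]
    rw [div_pow, one_pow]
    field_simp
  rw [h2, ← Finset.mul_sum]
  have h3 : ∑ j ∈ Finset.range (m + 1), |p j| * (1/s) ^ j ≤ T := by
    rw [hT]
    have hsub1 : ∑ j ∈ Finset.range (m + 1), |p j| * (1/s) ^ j ≤
        ∑ j ∈ Finset.range (m + 1 + n), |p j| * (1/s) ^ j :=
      Finset.sum_le_sum_of_subset_of_nonneg
        (Finset.range_subset_range.2 (Nat.le_add_right _ _)) (fun j _ _ => by positivity)
    refine hsub1.trans_eq ?_
    symm
    apply Finset.sum_subset (Finset.range_subset_range.2 (Nat.le_add_left _ _))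
    intro j _ hj
    have : n ≤ j := le_of_not_gt (fun hlt => hj (Finset.mem_range.2 hlt))
    rw [hp j this, abs_zero, zero_mul]
  calc (C * s ^ m) * ∑ j ∈ Finset.range (m + 1), |p j| * (1/s) ^ j
      ≤ (C * s ^ m) * T := mul_le_mul_of_nonneg_left h3 (by positivity)
    _ = (C * T) * s ^ m := by ring

set_option maxHeartbeats 1000000 in
lemma uniqueness {u : ℕ → ℝ} {C s : ℝ} (hC : 0 ≤ C) (hs : 0 ≤ s)
    (hu : ∀ m, |u m| ≤ C * s ^ m) (hu0 : u 0 ≠ 0)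
    {h : ℝ → ℝ} (hh : Continuous h)
    (H : ∀ x, ∑' m, u m * V^[m] h x = 0) : ∀ x, h x = 0 := by
  have hu0' : 0 < |u 0| := abs_pos.2 hu0
  set s' : ℝ := s + 1 with hs'
  set C' : ℝ := C + 1 with hC'
  have hs'0 : 0 < s' := by positivity
  have hC'0 : 0 < C' := by positivity
  set δ : ℝ := min (1 / (2 * s')) (|u 0| / (2 * C' * s')) with hδ
  have hδ0 : 0 < δ := lt_min (by positivity) (by positivity)
  have hδ1 : s' * δ ≤ 1/2 := by
    have : δ ≤ 1 / (2 * s') := min_le_left _ _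
    calc s' * δ ≤ s' * (1 / (2 * s')) := mul_le_mul_of_nonneg_left this (le_of_lt hs'0)
      _ = 1/2 := by field_simp
  have hδ2 : 2 * C' * s' * δ ≤ |u 0| := by
    have : δ ≤ |u 0| / (2 * C' * s') := min_le_right _ _
    calc 2 * C' * s' * δ ≤ 2 * C' * s' * (|u 0| / (2 * C' * s')) :=
          mul_le_mul_of_nonneg_left this (by positivity)
      _ = |u 0| := by field_simp
  have hsd0 : 0 ≤ s * δ := by positivity
  have hsd1 : s * δ < 1 := by nlinarith
  have hKlt : C * (s * δ) * (1 - s * δ)⁻¹ < |u 0| := by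
    have hhalf : 1 - s * δ ≥ 1/2 := by nlinarith
    have h1 : (1 - s * δ)⁻¹ ≤ 2 := by
      rw [inv_le_comm₀ (by linarith) (by norm_num)]
      linarith
    have hCs : C * s < C' * s' := by nlinarith
    calc C * (s * δ) * (1 - s * δ)⁻¹ ≤ C * (s * δ) * 2 :=
          mul_le_mul_of_nonneg_left h1 (by positivity)
      _ = 2 * (C * s) * δ := by ring
      _ < 2 * (C' * s') * δ := by
          have := mul_lt_mul_of_pos_right hCs hδ0
          nlinarith
      _ = 2 * C' * s' * δ := by ring
      _ ≤ |u 0| := hδ2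
  -- h 0 = 0
  have hV0 : ∀ (g : ℝ → ℝ) (m : ℕ), V^[m+1] g 0 = 0 := by
    intro g m
    rw [Function.iterate_succ_apply']
    exact intervalIntegral.integral_same
  have h00 : h 0 = 0 := by
    have h1 := H 0
    rw [Summable.tsum_eq_zero_add (summable_a_iterV hu hh 0)] at h1
    have h2 : ∑' m, u (m+1) * V^[m+1] h 0 = 0 := by
      have : ∀ m : ℕ, u (m+1) * V^[m+1] h 0 = 0 := fun m => by rw [hV0 h m, mul_zero]
      simp only [this, tsum_zero]
    rw [h2, add_zero] at h1
    simp only [Function.iterate_zero_apply] at h1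
    exact (mul_eq_zero.1 h1).resolve_left hu0
  -- the inductive step
  have step : ∀ a : ℝ, 0 ≤ a → (∀ y, |y| ≤ a → h y = 0) →
      ∀ y, |y| ≤ a + δ → h y = 0 := by
    intro a ha h0
    set b : ℝ := a + δ with hb
    have hb0 : 0 ≤ b := by positivity
    obtain ⟨y₀, hy₀mem, hy₀⟩ := isCompact_Icc.exists_isMaxOn
      (Set.nonempty_Icc.2 (by linarith : -b ≤ b)) (hh.abs.continuousOn)
    set M : ℝ := |h y₀| with hM
    have hM0 : 0 ≤ M := abs_nonneg _
    have hMb : ∀ y ∈ Set.Icc (-b) b, |h y| ≤ M := fun y hy => hy₀ hy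
    -- sub-induction on iterates
    have vb : ∀ m : ℕ, (∀ y, |y| ≤ a → V^[m] h y = 0) ∧
        (∀ x, |x| ≤ b → |V^[m] h x| ≤ M * δ ^ m) := by
      intro m
      induction m with
      | zero =>
        refine ⟨fun y hy => h0 y hy, fun x hx => ?_⟩
        simpa using hMb x (abs_le.1 hx)
      | succ m ih =>
        have hzero : ∀ y, |y| ≤ a → V^[m+1] h y = 0 := by
          intro y hy
          rw [Function.iterate_succ_apply']
          show (∫ t in (0:ℝ)..y, V^[m] h t) = 0
          rw [intervalIntegral.integral_congr (g := fun _ => (0:ℝ)), intervalIntegral.integral_zero]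
          intro t ht
          apply ih.1
          rcases le_total 0 y with hy' | hy'
          · rw [Set.uIcc_of_le hy'] at ht
            rw [abs_of_nonneg ht.1]
            exact le_trans ht.2 (le_trans (le_abs_self y) hy)
          · rw [Set.uIcc_of_ge hy'] at ht
            rw [abs_of_nonpos (le_trans ht.2 (le_refl 0))]
            have : -y ≤ a := le_trans (neg_le_abs y) hy
            linarith [ht.1]
        refine ⟨hzero, ?_⟩
        intro x hx
        by_cases hxa : |x| ≤ a
        · rw [hzero x hxa]
          simp only [abs_zero]
          positivity
        · push_neg at hxa
          rw [Function.iterate_succ_apply']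
          show |∫ t in (0:ℝ)..x, V^[m] h t| ≤ M * δ ^ (m+1)
          have hint : ∀ c d : ℝ, IntervalIntegrable (V^[m] h) volume c d :=
            fun c d => (continuous_iterV hh m).intervalIntegrable c d
          rcases le_total 0 x with hx0 | hx0
          · have hax : a < x := by rwa [abs_of_nonneg hx0] at hxa
            have hxb : x ≤ b := le_trans (le_abs_self x) hx
            rw [← intervalIntegral.integral_add_adjacent_intervals (hint 0 a) (hint a x)]
            have h1 : (∫ t in (0:ℝ)..a, V^[m] h t) = 0 := by
              have := hzero a (by rw [abs_of_nonneg ha])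
              rwa [Function.iterate_succ_apply'] at this
            rw [h1, zero_add]
            have h2 : |∫ t in a..x, V^[m] h t| ≤ (M * δ ^ m) * |x - a| := by
              rw [← Real.norm_eq_abs (∫ t in a..x, V^[m] h t)]
              apply intervalIntegral.norm_integral_le_of_norm_le_const
              intro t ht
              rw [Set.uIoc_of_le (le_of_lt hax)] at ht
              rw [Real.norm_eq_abs]
              apply ih.2
              rw [abs_of_nonneg (le_trans ha (le_of_lt ht.1))]
              linarith [ht.2]
            refine h2.trans ?_
            have h3 : |x - a| ≤ δ := by
              rw [abs_of_nonneg (by linarith)]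
              linarith
            calc (M * δ ^ m) * |x - a| ≤ (M * δ ^ m) * δ :=
                  mul_le_mul_of_nonneg_left h3 (by positivity)
              _ = M * δ ^ (m+1) := by ring
          · have hax : x < -a := by
              rw [abs_of_nonpos hx0] at hxa
              linarith
            have hxb : -b ≤ x := by
              have : -x ≤ b := le_trans (neg_le_abs x) hx
              linarith
            rw [← intervalIntegral.integral_add_adjacent_intervals (hint 0 (-a)) (hint (-a) x)]
            have h1 : (∫ t in (0:ℝ)..(-a), V^[m] h t) = 0 := by
              have := hzero (-a) (by rw [abs_neg, abs_of_nonneg ha])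
              rwa [Function.iterate_succ_apply'] at this
            rw [h1, zero_add]
            have h2 : |∫ t in (-a)..x, V^[m] h t| ≤ (M * δ ^ m) * |x - (-a)| := by
              rw [← Real.norm_eq_abs (∫ t in (-a)..x, V^[m] h t)]
              apply intervalIntegral.norm_integral_le_of_norm_le_const
              intro t ht
              rw [Set.uIoc_of_ge (le_of_lt hax)] at ht
              rw [Real.norm_eq_abs]
              apply ih.2
              rw [abs_of_nonpos (le_trans ht.2 (by linarith))]
              linarith [ht.1]
            refine h2.trans ?_
            have h3 : |x - (-a)| ≤ δ := by
              rw [abs_of_nonpos (by linarith)]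
              linarith
            calc (M * δ ^ m) * |x - (-a)| ≤ (M * δ ^ m) * δ :=
                  mul_le_mul_of_nonneg_left h3 (by positivity)
              _ = M * δ ^ (m+1) := by ring
    -- contraction estimate
    have hest : ∀ x, |x| ≤ b → |u 0| * |h x| ≤ C * (s * δ) * (1 - s * δ)⁻¹ * M := by
      intro x hx
      have hsum : Summable (fun m => u m * V^[m] h x) := summable_a_iterV hu hh x
      have hsum1 : Summable (fun m => u (m+1) * V^[m+1] h x) :=
        (summable_nat_add_iff 1).2 hsum
      have heq := H x
      rw [Summable.tsum_eq_zero_add hsum] at heq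
      have heq2 : u 0 * h x = - ∑' m, u (m+1) * V^[m+1] h x := by
        simp only [Function.iterate_zero_apply] at heq
        linarith [heq]
      have hterm : ∀ m : ℕ, |u (m+1) * V^[m+1] h x| ≤ (C * (s*δ) * M) * (s * δ) ^ m := by
        intro m
        rw [abs_mul]
        calc |u (m+1)| * |V^[m+1] h x| ≤ (C * s ^ (m+1)) * (M * δ ^ (m+1)) :=
              mul_le_mul (hu (m+1)) ((vb (m+1)).2 x hx) (abs_nonneg _) (by positivity)
          _ = (C * (s*δ) * M) * (s * δ) ^ m := by rw [mul_pow, pow_succ, pow_succ]; ring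
      have habs_sum : Summable (fun m => |u (m+1) * V^[m+1] h x|) := by
        apply Summable.of_nonneg_of_le (fun m => abs_nonneg _) hterm
        exact (summable_geometric_of_lt_one hsd0 hsd1).mul_left _
      have hgeom : Summable (fun m : ℕ => (C * (s*δ) * M) * (s * δ) ^ m) :=
        (summable_geometric_of_lt_one hsd0 hsd1).mul_left _
      calc |u 0| * |h x| = |u 0 * h x| := (abs_mul _ _).symm
        _ = |∑' m, u (m+1) * V^[m+1] h x| := by rw [heq2, abs_neg]
        _ ≤ ∑' m, |u (m+1) * V^[m+1] h x| := by
            have h4 : Summable (fun m => ‖u (m+1) * V^[m+1] h x‖) := by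
              simpa only [Real.norm_eq_abs] using habs_sum
            have h5 := norm_tsum_le_tsum_norm h4
            simpa only [Real.norm_eq_abs] using h5
        _ ≤ ∑' m : ℕ, (C * (s*δ) * M) * (s * δ) ^ m := Summable.tsum_le_tsum hterm habs_sum hgeom
        _ = (C * (s*δ) * M) * (1 - s * δ)⁻¹ := by
            rw [tsum_mul_left, tsum_geometric_of_lt_one hsd0 hsd1]
        _ = C * (s * δ) * (1 - s * δ)⁻¹ * M := by ring
    have hMzero : M = 0 := by
      by_contra hMne
      have hMpos : 0 < M := lt_of_le_of_ne hM0 (Ne.symm hMne)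
      have h1 : |u 0| * M ≤ C * (s * δ) * (1 - s * δ)⁻¹ * M := by
        have := hest y₀ (abs_le.2 hy₀mem)
        rwa [← hM] at this
      nlinarith [hKlt]
    intro y hy
    have : |h y| ≤ M := hMb y (abs_le.1 hy)
    rw [hMzero] at this
    exact abs_eq_zero.1 (le_antisymm this (abs_nonneg _))
  -- global induction
  have main : ∀ k : ℕ, ∀ y : ℝ, |y| ≤ k * δ → h y = 0 := by
    intro k
    induction k with
    | zero =>
      intro y hy
      simp only [Nat.cast_zero, zero_mul] at hy
      have : y = 0 := abs_eq_zero.1 (le_antisymm hy (abs_nonneg _))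
      rw [this, h00]
    | succ k ih =>
      have := step ((k : ℝ) * δ) (by positivity) ih
      intro y hy
      apply this
      push_cast at hy ⊢
      linarith [hy]
  intro x
  obtain ⟨k, hk⟩ := exists_nat_ge (|x| / δ)
  apply main k
  rw [div_le_iff₀ hδ0] at hk
  exact hk

set_option maxHeartbeats 1000000 in
lemma u_dot_E (u v p : ℕ → ℝ) {Cu su Cv sv : ℝ}
    (hCu : 0 ≤ Cu) (hsu : 0 ≤ su) (hub : ∀ m, |u m| ≤ Cu * su ^ m)
    (hCv : 0 ≤ Cv) (hsv : 0 < sv) (hvb : ∀ k, |v k| ≤ Cv * sv ^ k)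
    (hvu : ∀ m : ℕ, ∑ k ∈ Finset.range (m + 1), v k * u (m - k) = if m = 0 then 1 else 0)
    (n : ℕ) (hpz : ∀ k, n ≤ k → p k = 0) (x : ℝ) :
    ∑' m, u m * V^[m] (fun y => ∑' j, (∑ k ∈ Finset.range (j + 1), v k * p (j - k)) * y ^ j /
        (Nat.factorial j)) x = ∑ k ∈ Finset.range n, p k * x ^ k / (Nat.factorial k) := by
  set q : ℕ → ℝ := fun m => ∑ k ∈ Finset.range (m + 1), v k * p (m - k) with hq
  set Cq : ℝ := Cv * ∑ j ∈ Finset.range n, |p j| * (1/sv) ^ j with hCq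
  have hCq0 : 0 ≤ Cq := by positivity
  have hqb : ∀ m, |q m| ≤ Cq * sv ^ m := cauchy_bound hCv hsv hvb n hpz
  show ∑' m, u m * V^[m] (fun y => ∑' j, q j * y ^ j / (Nat.factorial j)) x =
    ∑ k ∈ Finset.range n, p k * x ^ k / (Nat.factorial k)
  calc ∑' m, u m * V^[m] (fun y => ∑' j, q j * y ^ j / (Nat.factorial j)) x
      = ∑' m, u m * (∑' j, q j * x ^ (j + m) / (Nat.factorial (j + m))) :=
        tsum_congr fun m => by rw [iterV_E q Cq sv hCq0 (le_of_lt hsv) hqb m x]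
    _ = ∑' i, (∑ k ∈ Finset.range (i + 1), u k * q (i - k)) * x ^ i / (Nat.factorial i) :=
        core u q Cu su Cq sv hCu hsu hCq0 (le_of_lt hsv) hub hqb x
    _ = ∑' i, p i * x ^ i / (Nat.factorial i) := by
        refine tsum_congr fun i => ?_
        have hci := cauchy_inverse u v p hvu i
        simp only [hq]
        rw [hci]
    _ = ∑ i ∈ Finset.range n, p i * x ^ i / (Nat.factorial i) := by
        refine tsum_eq_sum fun i hi => ?_
        rw [hpz i (le_of_not_gt fun hlt => hi (Finset.mem_range.2 hlt)), zero_mul, zero_div]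

end Thm1Aux


/-- Theorem 1: let `u`, `v` be convergent power series with `v·u = 1` (formally),
`n ≥ 1` and `w` continuous.  Then `u • w` is a polynomial function of degree `≤ n-1`
(in the "divided power" basis `x^k/k!`) iff `w = E(v·p)` for some polynomial `p` of
degree `≤ n-1`, where `v·p` is the Cauchy product and `E` the E-transform. -/
theorem solutions_of_D_phi (u v : ℕ → ℝ)
    (hu : ∃ r : ℝ, 0 < r ∧ Summable (fun n => |u n| * r ^ n))
    (hv : ∃ r : ℝ, 0 < r ∧ Summable (fun n => |v n| * r ^ n))
    (hvu : ∀ m : ℕ, ∑ k ∈ Finset.range (m + 1), v k * u (m - k) = if m = 0 then 1 else 0)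
    (n : ℕ) (hn : 1 ≤ n) (w : ℝ → ℝ) (hw : Continuous w) :
    (∃ c : ℕ → ℝ, ∀ x : ℝ,
        ∑' m, u m * (V^[m] w) x = ∑ k ∈ Finset.range n, c k * x ^ k / (Nat.factorial k)) ↔
    (∃ p : ℕ → ℝ, (∀ k, n ≤ k → p k = 0) ∧ ∀ x : ℝ,
        w x = ∑' m, (∑ k ∈ Finset.range (m + 1), v k * p (m - k)) * x ^ m / (Nat.factorial m)) := by
  obtain ⟨ru, hru, hsumu⟩ := hu
  obtain ⟨rv, hrv, hsumv⟩ := hv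
  obtain ⟨Cu, su, hCu, hsu0, hub⟩ := Thm1Aux.exists_geom_bound hru hsumu
  obtain ⟨Cv, sv, hCv, hsv0, hvb⟩ := Thm1Aux.exists_geom_bound hrv hsumv
  have hu0 : u 0 ≠ 0 := by
    have h0 := hvu 0
    simp at h0
    intro hz
    rw [hz, mul_zero] at h0
    norm_num at h0
  constructor
  · rintro ⟨c, hc⟩
    set p : ℕ → ℝ := fun k => if k < n then c k else 0 with hp
    have hpz : ∀ k, n ≤ k → p k = 0 := fun k hk => by simp [hp, Nat.not_lt.2 hk]
    set g : ℝ → ℝ := fun x => ∑' j, (∑ k ∈ Finset.range (j + 1), v k * p (j - k)) * x ^ j /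
      (Nat.factorial j) with hg
    have hqb : ∀ m, |∑ k ∈ Finset.range (m + 1), v k * p (m - k)| ≤
        (Cv * ∑ j ∈ Finset.range n, |p j| * (1/sv) ^ j) * sv ^ m :=
      Thm1Aux.cauchy_bound hCv hsv0 hvb n hpz
    have hgcont : Continuous g :=
      Thm1Aux.continuous_E (q := fun m => ∑ k ∈ Finset.range (m + 1), v k * p (m - k))
        (by positivity) (le_of_lt hsv0) hqb
    have hug : ∀ x, ∑' m, u m * V^[m] g x =
        ∑ k ∈ Finset.range n, p k * x ^ k / (Nat.factorial k) :=
      fun x => Thm1Aux.u_dot_E u v p hCu (le_of_lt hsu0) hub hCv hsv0 hvb hvu n hpz x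
    have hdiff : ∀ x, ∑' m, u m * V^[m] (fun y => w y - g y) x = 0 := by
      intro x
      have h2 : ∀ m : ℕ, u m * V^[m] (fun y => w y - g y) x =
          u m * V^[m] w x - u m * V^[m] g x := by
        intro m
        rw [Thm1Aux.iterV_sub hw hgcont m x]
        ring
      rw [tsum_congr h2,
        Summable.tsum_sub (Thm1Aux.summable_a_iterV hub hw x) (Thm1Aux.summable_a_iterV hub hgcont x),
        hc x, hug x, sub_eq_zero]
      refine Finset.sum_congr rfl fun k hk => ?_
      rw [hp]
      simp [Finset.mem_range.1 hk]
    have hwg := Thm1Aux.uniqueness hCu (le_of_lt hsu0) hub hu0 (hw.sub hgcont) hdiff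
    refine ⟨p, hpz, fun x => ?_⟩
    have h2 : w x - g x = 0 := hwg x
    have h3 : w x = g x := by linarith
    rw [h3, hg]
  · rintro ⟨p, hpz, hwp⟩
    have hwfun : w = fun x => ∑' j, (∑ k ∈ Finset.range (j + 1), v k * p (j - k)) * x ^ j /
        (Nat.factorial j) := funext fun x => hwp x
    refine ⟨p, fun x => ?_⟩
    rw [hwfun]
    exact Thm1Aux.u_dot_E u v p hCu (le_of_lt hsu0) hub hCv hsv0 hvb hvu n hpz x
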